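/- Let F be a field, n, k, m, D ∈ ℕ with k ≥ 2 and m ≥ 1, and let (α_j, β_j) ∈ F² for j ∈ [n] be arbitrary points. If the number of pairs (i,j) ∈ ℕ² with i + (k−1)·j ≤ D is strictly greater than n·m·(m+1)/2, then there exists a nonzero polynomial Q(X,Y) ∈ F[X,Y] of (1,k−1)-degree at most D that vanishes with multiplicity at least m at every point (α_j, β_j), j ∈ [n]. -/

import Mathlib

/-!
STATEMENT 4: Let F be a field, n, k, m, D ∈ ℕ with k ≥ 2 and m ≥ 1, and let (α_j, β_j) ∈ F²
for j ∈ [n] be arbitrary points. If the number of pairs (i,j) ∈ ℕ² with i + (k−1)·j ≤ D is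
strictly greater than n·m·(m+1)/2, then there exists a nonzero polynomial Q(X,Y) ∈ F[X,Y] of
(1,k−1)-degree at most D that vanishes with multiplicity at least m at every point
(α_j, β_j), j ∈ [n].

Bivariate polynomials in F[X,Y] are represented as `Polynomial (Polynomial F)` with outer
variable Y and inner variable X; the coefficient of X^i·Y^j in Q is `(Q.coeff j).coeff i`.
Since k ≥ 2 (so k−1 ≥ 1), every pair (i,j) ∈ ℕ² with i + (k−1)·j ≤ D has i ≤ D and j ≤ D,
so the set of such pairs is exactly the finite set used below.  Note also that m·(m+1) is
always even, so natural-number division by 2 expresses n·m·(m+1)/2 exactly.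
-/

/-- The shifted bivariate polynomial `Q(X+α, Y+β)`. -/
noncomputable def taylorShift2 {F : Type*} [CommRing F] (Q : Polynomial (Polynomial F))
    (α β : F) : Polynomial (Polynomial F) :=
  (Q.comp (Polynomial.X + Polynomial.C (Polynomial.C β))).map
    (Polynomial.eval₂RingHom Polynomial.C (Polynomial.X + Polynomial.C α))

/-- `Q` vanishes with multiplicity at least `m` at `(α,β)`:  all Hasse derivatives of order
less than `m` vanish at `(α,β)`, i.e. all coefficients of monomials `X^{e1}·Y^{e2}` with
`e1 + e2 < m` of `Q(X+α, Y+β)` are zero. -/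
def VanishesWithMult {F : Type*} [CommRing F] (Q : Polynomial (Polynomial F))
    (α β : F) (m : ℕ) : Prop :=
  ∀ e1 e2 : ℕ, e1 + e2 < m → ((taylorShift2 Q α β).coeff e2).coeff e1 = 0

open Polynomial Finset

lemma ts2_add {F : Type*} [CommRing F] (P Q : Polynomial (Polynomial F)) (α β : F) :
    taylorShift2 (P + Q) α β = taylorShift2 P α β + taylorShift2 Q α β := by
  simp [taylorShift2, add_comp, Polynomial.map_add]

lemma ts2_zero {F : Type*} [CommRing F] (α β : F) :
    taylorShift2 (0 : Polynomial (Polynomial F)) α β = 0 := by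
  simp [taylorShift2]

lemma ts2_Cmul {F : Type*} [CommRing F] (a : F) (Q : Polynomial (Polynomial F)) (α β : F) :
    taylorShift2 (Polynomial.C (Polynomial.C a) * Q) α β
      = Polynomial.C (Polynomial.C a) * taylorShift2 Q α β := by
  simp [taylorShift2, mul_comp, C_comp, Polynomial.map_mul, Polynomial.map_C]

noncomputable def ts2Hom {F : Type*} [CommRing F] (α β : F) :
    Polynomial (Polynomial F) →+ Polynomial (Polynomial F) where
  toFun := fun Q => taylorShift2 Q α β
  map_zero' := ts2_zero α β
  map_add' := fun P Q => ts2_add P Q α β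

lemma Tcard (m : ℕ) :
    (((Finset.range m) ×ˢ (Finset.range m)).filter (fun e : ℕ × ℕ => e.1 + e.2 < m)).card
      = m * (m + 1) / 2 := by
  have h1 : ((Finset.range m) ×ˢ (Finset.range m)).filter (fun e : ℕ × ℕ => e.1 + e.2 < m)
      = (Finset.range m).biUnion (fun s => Finset.HasAntidiagonal.antidiagonal s) := by
    ext ⟨a, b⟩
    simp only [mem_filter, mem_product, mem_range, mem_biUnion, Finset.HasAntidiagonal.mem_antidiagonal]
    constructor
    · rintro ⟨⟨_, _⟩, h⟩; exact ⟨a + b, h, rfl⟩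
    · rintro ⟨s, hs, rfl⟩; omega
  rw [h1, Finset.card_biUnion]
  · have key : (∑ s ∈ Finset.range m, (Finset.HasAntidiagonal.antidiagonal s).card) * 2 = m * (m + 1) := by
      have h3 := Finset.sum_range_id_mul_two m
      simp only [Finset.Nat.card_antidiagonal]
      rw [Finset.sum_add_distrib, add_mul, h3]
      simp only [Finset.sum_const, card_range, smul_eq_mul, mul_one]
      cases m with
      | zero => rfl
      | succ m => simp only [Nat.add_sub_cancel]; ring
    omega
  · intro x _ y _ hxy
    simp only [Finset.disjoint_left, Finset.HasAntidiagonal.mem_antidiagonal]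
    rintro ⟨a, b⟩ h1 h2; exact hxy (h1 ▸ h2 ▸ rfl)

theorem statement4 (F : Type*) [Field F] (n k m D : ℕ) (hk : 2 ≤ k) (hm : 1 ≤ m)
    (α β : Fin n → F)
    (hcount : n * m * (m + 1) / 2 <
      (((Finset.range (D + 1)) ×ˢ (Finset.range (D + 1))).filter
        (fun p : ℕ × ℕ => p.1 + (k - 1) * p.2 ≤ D)).card) :
    ∃ Q : Polynomial (Polynomial F), Q ≠ 0 ∧
      (∀ i j : ℕ, (Q.coeff j).coeff i ≠ 0 → i + (k - 1) * j ≤ D) ∧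
      (∀ j : Fin n, VanishesWithMult Q (α j) (β j) m) := by
  classical
  set S : Finset (ℕ × ℕ) := ((Finset.range (D + 1)) ×ˢ (Finset.range (D + 1))).filter
    (fun p : ℕ × ℕ => p.1 + (k - 1) * p.2 ≤ D) with hS
  set T : Finset (ℕ × ℕ) := ((Finset.range m) ×ˢ (Finset.range m)).filter
    (fun e : ℕ × ℕ => e.1 + e.2 < m) with hT
  -- the matrix of the linear conditions on the monomials indexed by S
  set mono : ℕ × ℕ → Polynomial (Polynomial F) :=
    fun p => Polynomial.monomial p.2 (Polynomial.monomial p.1 (1 : F)) with hmono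
  set M : Matrix (Fin n × ↥T) ↥S F := fun cond p =>
    ((taylorShift2 (mono p.val) (α cond.1) (β cond.1)).coeff cond.2.val.2).coeff cond.2.val.1
    with hM
  -- there is a nonzero kernel vector
  have hker : ∃ c : ↥S → F, c ≠ 0 ∧ M.mulVec c = 0 := by
    by_contra hcon
    push_neg at hcon
    have hinj : Function.Injective M.mulVecLin := by
      rw [← LinearMap.ker_eq_bot, LinearMap.ker_eq_bot']
      intro c hc
      by_contra hne
      exact hcon c hne hc
    have hle := LinearMap.finrank_le_finrank_of_injective hinj
    rw [Module.finrank_fintype_fun_eq_card, Module.finrank_fintype_fun_eq_card,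
      Fintype.card_coe, Fintype.card_prod, Fintype.card_coe, Fintype.card_fin, Tcard] at hle
    have h2 : n * (m * (m + 1) / 2) = n * m * (m + 1) / 2 := by
      rw [mul_assoc, Nat.mul_div_assoc n (Nat.even_mul_succ_self m).two_dvd]
    omega
  obtain ⟨c, hc0, hcker⟩ := hker
  -- the polynomial
  set Q : Polynomial (Polynomial F) :=
    ∑ p ∈ S.attach, Polynomial.C (Polynomial.C (c p)) * mono p.val with hQ
  -- coefficients of Q
  have coeffQ : ∀ i j : ℕ, (Q.coeff j).coeff i
      = if h : (i, j) ∈ S then c ⟨(i, j), h⟩ else 0 := by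
    intro i j
    rw [hQ, Polynomial.finset_sum_coeff]
    simp_rw [Polynomial.finset_sum_coeff]
    have hterm : ∀ p ∈ S.attach,
        ((Polynomial.C (Polynomial.C (c p)) * mono p.val).coeff j).coeff i
          = if p.val = (i, j) then c p else 0 := by
      intro p _
      rcases p with ⟨⟨a, b⟩, hp⟩
      by_cases hb : b = j <;> by_cases ha : a = i <;>
        simp [hmono, Polynomial.coeff_C_mul, Polynomial.coeff_monomial, ha, hb, Prod.ext_iff]
    rw [Finset.sum_congr rfl hterm]
    by_cases h : (i, j) ∈ S
    · rw [dif_pos h, Finset.sum_eq_single (⟨(i, j), h⟩ : ↥S)]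
      · rw [if_pos rfl]
      · intro b _ hb
        exact if_neg (fun hc' => hb (Subtype.ext hc'))
      · intro h'; exact absurd (Finset.mem_attach _ _) h'
    · rw [dif_neg h]
      apply Finset.sum_eq_zero
      intro p _
      apply if_neg
      intro hc'
      exact h (hc' ▸ p.prop)
  -- expansion of the conditions
  have expand : ∀ (j : Fin n) (e : ↥T),
      ((taylorShift2 Q (α j) (β j)).coeff e.val.2).coeff e.val.1
        = ∑ p ∈ S.attach, M (j, e) p * c p := by
    intro j e
    have h0 : taylorShift2 Q (α j) (β j) = ∑ p ∈ S.attach,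
        Polynomial.C (Polynomial.C (c p)) * taylorShift2 (mono p.val) (α j) (β j) := by
      rw [hQ]
      rw [show taylorShift2 (∑ p ∈ S.attach, Polynomial.C (Polynomial.C (c p)) * mono p.val)
            (α j) (β j)
          = ts2Hom (α j) (β j) (∑ p ∈ S.attach, Polynomial.C (Polynomial.C (c p)) * mono p.val)
          from rfl]
      rw [map_sum]
      exact Finset.sum_congr rfl fun p _ => ts2_Cmul _ _ _ _
    rw [h0, Polynomial.finset_sum_coeff, Polynomial.finset_sum_coeff]
    refine Finset.sum_congr rfl fun p _ => ?_
    rw [Polynomial.coeff_C_mul, Polynomial.coeff_C_mul, mul_comm]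
  refine ⟨Q, ?_, ?_, ?_⟩
  · -- Q ≠ 0
    intro hQ0
    apply hc0
    funext p
    have h := coeffQ p.val.1 p.val.2
    rw [hQ0] at h
    simp only [Polynomial.coeff_zero] at h
    rw [dif_pos (show (p.val.1, p.val.2) ∈ S from by rw [Prod.mk.eta]; exact p.prop)] at h
    have hp : (⟨(p.val.1, p.val.2), by rw [Prod.mk.eta]; exact p.prop⟩ : ↥S) = p := by
      apply Subtype.ext
      exact Prod.mk.eta
    rw [hp] at h
    exact h.symm
  · -- degree bound
    intro i j hij
    rw [coeffQ i j] at hij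
    by_cases h : (i, j) ∈ S
    · rw [hS] at h
      exact (Finset.mem_filter.mp h).2
    · rw [dif_neg h] at hij
      exact absurd rfl hij
  · -- vanishing
    intro j e1 e2 he
    have he1 : (e1, e2) ∈ T := by
      rw [hT]
      simp only [Finset.mem_filter, Finset.mem_product, Finset.mem_range]
      omega
    have h0 : M.mulVec c (j, ⟨(e1, e2), he1⟩) = 0 := by rw [hcker]; rfl
    have h1 : M.mulVec c (j, ⟨(e1, e2), he1⟩)
        = ∑ p ∈ S.attach, M (j, ⟨(e1, e2), he1⟩) p * c p := by
      rw [← Finset.univ_eq_attach]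
      rfl
    have := expand j ⟨(e1, e2), he1⟩
    simp only at this
    rw [this, ← h1, h0]
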